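/- arXiv:1805.02447 — 4 statements merged into one kernel-verified Lean document; each statement's English description precedes it below -/
import Mathlib

section
/- (Order claim, Lemma 1.) Let a, b, c, d be points of the terrain with a < b < c < d. If a sees c and b sees d, then a sees d. -/
/-- `p` sees `q` on terrain `T`: the segment joining `(p, T p)` and `(q, T q)`
lies on or above the graph of `T`. -/
def Sees (T : ℝ → ℝ) (p q : ℝ) : Prop :=
  ∀ t ∈ Set.Icc (0 : ℝ) 1, T ((1 - t) * p + t * q) ≤ (1 - t) * T p + t * T q

/-- `v` left-guards `p`: `v` is on or to the left of `p` and sees `p`. -/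
def LeftGuards (T : ℝ → ℝ) (v p : ℝ) : Prop := v ≤ p ∧ Sees T v p

/-- `v` right-guards `p`: `v` is on or to the right of `p` and sees `p`. -/
def RightGuards (T : ℝ → ℝ) (v p : ℝ) : Prop := p ≤ v ∧ Sees T v p

/-- A set `S` two-sided guards `p` if some member left-guards `p` and some member
right-guards `p`. -/
def TwoSidedGuards (T : ℝ → ℝ) (S : Set ℝ) (p : ℝ) : Prop :=
  (∃ v ∈ S, LeftGuards T v p) ∧ (∃ v ∈ S, RightGuards T v p)

/-- A 1.5D terrain with `n + 1` vertices: an `x`-monotone polygonal chain, given by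
strictly increasing vertex abscissas `x 0 < ⋯ < x n` and a height function `T` which is
continuous on `[x 0, x n]` and affine on each edge interval `[x j, x (j+1)]`. -/
structure Terrain (n : ℕ) where
  x : Fin (n + 1) → ℝ
  mono : StrictMono x
  T : ℝ → ℝ
  cont : ContinuousOn T (Set.Icc (x 0) (x (Fin.last n)))
  affine : ∀ j : Fin n, ∀ t ∈ Set.Icc (0 : ℝ) 1,
    T ((1 - t) * x j.castSucc + t * x j.succ) =
      (1 - t) * T (x j.castSucc) + t * T (x j.succ)


/-- Evaluation form of `Sees`: for `x ∈ [p, q]`, `T x` lies below the chord,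
with denominators cleared. -/
lemma sees_eval {T : ℝ → ℝ} {p q : ℝ} (hpq : p < q) (h : Sees T p q) {x : ℝ}
    (hx : x ∈ Set.Icc p q) : T x * (q - p) ≤ (q - x) * T p + (x - p) * T q := by
  have hqp : (0:ℝ) < q - p := by linarith
  have ht : (x - p) / (q - p) ∈ Set.Icc (0:ℝ) 1 := by
    constructor
    · exact div_nonneg (by linarith [hx.1]) hqp.le
    · rw [div_le_one hqp]; linarith [hx.2]
  have h2 := h _ ht
  have hx' : (1 - (x - p)/(q - p)) * p + (x - p)/(q - p) * q = x := by
    field_simp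
    ring
  rw [hx'] at h2
  calc T x * (q - p) ≤ ((1 - (x - p)/(q - p)) * T p + (x - p)/(q - p) * T q) * (q - p) :=
        mul_le_mul_of_nonneg_right h2 hqp.le
    _ = (q - x) * T p + (x - p) * T q := by field_simp; ring

/-- **Order claim (Lemma 1).** If `a < b < c < d` are points of the terrain, `a` sees `c`
and `b` sees `d`, then `a` sees `d`. -/
theorem order_claim {n : ℕ} (Ter : Terrain n) (hn : 1 ≤ n) (a b c d : ℝ)
    (ha : a ∈ Set.Icc (Ter.x 0) (Ter.x (Fin.last n)))
    (hb : b ∈ Set.Icc (Ter.x 0) (Ter.x (Fin.last n)))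
    (hc : c ∈ Set.Icc (Ter.x 0) (Ter.x (Fin.last n)))
    (hd : d ∈ Set.Icc (Ter.x 0) (Ter.x (Fin.last n)))
    (hab : a < b) (hbc : b < c) (hcd : c < d)
    (hac : Sees Ter.T a c) (hbd : Sees Ter.T b d) :
    Sees Ter.T a d := by
  have hB := sees_eval (hab.trans hbc) hac ⟨hab.le, hbc.le⟩
  have hC := sees_eval (hbc.trans hcd) hbd ⟨hbc.le, hcd.le⟩
  have hcb : (0:ℝ) < c - b := by linarith
  have e1 : (0:ℝ) ≤ (d - c) * ((c - b) * Ter.T a + (b - a) * Ter.T c - Ter.T b * (c - a)) :=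
    mul_nonneg (by linarith) (by linarith [hB])
  have e2 : (0:ℝ) ≤ (c - a) * ((d - c) * Ter.T b + (c - b) * Ter.T d - Ter.T c * (d - b)) :=
    mul_nonneg (by linarith) (by linarith [hC])
  have e3 : (0:ℝ) ≤ (d - b) * ((c - b) * Ter.T a + (b - a) * Ter.T c - Ter.T b * (c - a)) :=
    mul_nonneg (by linarith) (by linarith [hB])
  have e4 : (0:ℝ) ≤ (b - a) * ((d - c) * Ter.T b + (c - b) * Ter.T d - Ter.T c * (d - b)) :=
    mul_nonneg (by linarith) (by linarith [hC])
  -- `T c` lies below the chord from `a` to `d`: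
  have key1 : (d - a) * Ter.T c ≤ (d - c) * Ter.T a + (c - a) * Ter.T d := by
    nlinarith [e1, e2, hcb]
  -- `T b` lies below the chord from `a` to `d`:
  have key2 : (d - a) * Ter.T b ≤ (d - b) * Ter.T a + (b - a) * Ter.T d := by
    nlinarith [e3, e4, hcb]
  intro t ht
  obtain ⟨ht0, ht1⟩ := ht
  have hax : a ≤ (1 - t) * a + t * d := by nlinarith
  have hxd : (1 - t) * a + t * d ≤ d := by nlinarith
  by_cases hxc : (1 - t) * a + t * d ≤ c
  · have h1 := sees_eval (hab.trans hbc) hac ⟨hax, hxc⟩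
    have hca : (0:ℝ) < c - a := by linarith
    have H : (0:ℝ) ≤ t * ((d - c) * Ter.T a + (c - a) * Ter.T d - (d - a) * Ter.T c) :=
      mul_nonneg ht0 (by linarith [key1])
    nlinarith [h1, H, hca]
  · push_neg at hxc
    have hbx : b ≤ (1 - t) * a + t * d := by linarith
    have h2 := sees_eval (hbc.trans hcd) hbd ⟨hbx, hxd⟩
    have hdb : (0:ℝ) < d - b := by linarith
    have H : (0:ℝ) ≤ (1 - t) * ((d - b) * Ter.T a + (b - a) * Ter.T d - (d - a) * Ter.T b) :=
      mul_nonneg (by linarith) (by linarith [key2])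
    nlinarith [h2, H, hdb]
end

section
/- (Lemma 2, discretization of one edge.) For each edge eⱼ of the terrain, there exist two points p and q with xⱼ < p ≤ q < xⱼ₊₁ (in particular excluding the endpoints xⱼ and xⱼ₊₁) such that for every set S of vertices of the terrain: if S two-sided guards every vertex of the terrain and S two-sided guards both p and q, then S two-sided guards every point of the closed edge [xⱼ, xⱼ₊₁]. -/
lemma sees_of_line {T : ℝ → ℝ} {p q : ℝ} (hpq : p < q)
    (h : ∀ u ∈ Set.Icc p q, (q - p) * T u ≤ (q - u) * T p + (u - p) * T q) : Sees T p q := by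
  intro t ht
  obtain ⟨ht0, ht1⟩ := ht
  have hqp : (0:ℝ) < q - p := sub_pos.2 hpq
  have hu : (1 - t) * p + t * q ∈ Set.Icc p q := by
    constructor <;> nlinarith
  have h2 := h _ hu
  have h3 : (q - p) * T ((1 - t) * p + t * q) ≤ (q - p) * ((1 - t) * T p + t * T q) := by
    nlinarith [h2]
  exact le_of_mul_le_mul_left h3 hqp

lemma line_of_sees {T : ℝ → ℝ} {p q : ℝ} (hpq : p < q) (h : Sees T p q) :
    ∀ u ∈ Set.Icc p q, (q - p) * T u ≤ (q - u) * T p + (u - p) * T q := by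
  intro u hu
  have hqp : (0:ℝ) < q - p := sub_pos.2 hpq
  have ht : (u - p) / (q - p) ∈ Set.Icc (0:ℝ) 1 := by
    constructor
    · exact div_nonneg (by linarith [hu.1]) hqp.le
    · rw [div_le_one hqp]; linarith [hu.2]
  have h2 := h _ ht
  have key : (1 - (u - p) / (q - p)) * p + ((u - p) / (q - p)) * q = u := by
    field_simp
    ring
  rw [key] at h2
  have h3 := mul_le_mul_of_nonneg_left h2 hqp.le
  calc (q - p) * T u ≤ (q - p) * ((1 - (u - p) / (q - p)) * T p + (u - p) / (q - p) * T q) := h3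
    _ = (q - u) * T p + (u - p) * T q := by field_simp; ring

lemma sees_neg {T : ℝ → ℝ} {p q : ℝ} :
    Sees (fun u => T (-u)) (-p) (-q) ↔ Sees T p q := by
  constructor <;> intro h t ht <;> have h2 := h t ht <;>
    simp only [neg_neg] at h2 ⊢ <;>
    have e : (1-t) * -p + t * -q = -((1-t)*p + t*q) := by ring
  · rw [e] at h2; simpa using h2
  · rw [e]; simpa using h2

set_option maxHeartbeats 1600000 in
lemma order_claim_s3 {T : ℝ → ℝ} {a b c d : ℝ} (hab : a ≤ b) (hbc : b < c) (hcd : c ≤ d)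
    (hac : Sees T a c) (hbd : Sees T b d) : Sees T a d := by
  have hac' : a < c := lt_of_le_of_lt hab hbc
  have hbd' : b < d := lt_of_lt_of_le hbc hcd
  have had' : a < d := lt_of_lt_of_le hac' hcd
  have hca : (0:ℝ) < c - a := sub_pos.2 hac'
  have hdb : (0:ℝ) < d - b := sub_pos.2 hbd'
  have hda : (0:ℝ) < d - a := sub_pos.2 had'
  have S1 := line_of_sees hac' hac
  have S2 := line_of_sees hbd' hbd
  have S1b := S1 b ⟨hab, hbc.le⟩
  have S2c := S2 c ⟨hbc.le, hcd⟩
  have ψb : 0 ≤ ((d - b) * ((c - b) * T a + (b - a) * T c) - (c - a) * ((d - b) * T b + (b - b) * T d)) := by nlinarith [mul_le_mul_of_nonneg_left S1b hdb.le]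
  have ψc : ((d - b) * ((c - c) * T a + (c - a) * T c) - (c - a) * ((d - c) * T b + (c - b) * T d)) ≤ 0 := by nlinarith [mul_le_mul_of_nonneg_left S2c hca.le]
  have ψa : 0 ≤ ((d - b) * ((c - a) * T a + (a - a) * T c) - (c - a) * ((d - a) * T b + (a - b) * T d)) := by
    have key : (c - b) * ((d - b) * ((c - a) * T a + (a - a) * T c) - (c - a) * ((d - a) * T b + (a - b) * T d)) = (c - a) * ((d - b) * ((c - b) * T a + (b - a) * T c) - (c - a) * ((d - b) * T b + (b - b) * T d)) + (a - b) * ((d - b) * ((c - c) * T a + (c - a) * T c) - (c - a) * ((d - c) * T b + (c - b) * T d)) := by ring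
    nlinarith [key, mul_nonneg hca.le ψb, mul_nonneg (sub_nonneg.2 hab) (neg_nonneg.2 ψc)]
  have hξ : ∃ ξ ∈ Set.Icc b c,
      (fun x : ℝ => ((d - b) * ((c - x) * T a + (x - a) * T c) - (c - a) * ((d - x) * T b + (x - b) * T d))) ξ = 0 := by
    have hcont : ContinuousOn (fun x : ℝ => ((d - b) * ((c - x) * T a + (x - a) * T c) - (c - a) * ((d - x) * T b + (x - b) * T d))) (Set.Icc b c) := by
      apply Continuous.continuousOn; fun_prop
    have hmem : (0:ℝ) ∈ Set.Icc ((fun x : ℝ => ((d - b) * ((c - x) * T a + (x - a) * T c) - (c - a) * ((d - x) * T b + (x - b) * T d))) c) ((fun x : ℝ => ((d - b) * ((c - x) * T a + (x - a) * T c) - (c - a) * ((d - x) * T b + (x - b) * T d))) b) := ⟨ψc, ψb⟩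
    obtain ⟨ξ, hξm, hξv⟩ := intermediate_value_Icc' hbc.le hcont hmem
    exact ⟨ξ, hξm, hξv⟩
  obtain ⟨ξ, ⟨hbξ, hξc⟩, hψξ⟩ := hξ
  have hψξ' : ((d - b) * ((c - ξ) * T a + (ξ - a) * T c) - (c - a) * ((d - ξ) * T b + (ξ - b) * T d)) = 0 := hψξ
  have θa : 0 ≤ ((d - b) * ((d - a) * T a + (a - a) * T d) - (d - a) * ((d - a) * T b + (a - b) * T d)) := by
    have key : (c - a) * ((d - b) * ((d - a) * T a + (a - a) * T d) - (d - a) * ((d - a) * T b + (a - b) * T d)) = (d - a) * ((d - b) * ((c - a) * T a + (a - a) * T c) - (c - a) * ((d - a) * T b + (a - b) * T d)) := by ring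
    nlinarith [key, mul_nonneg hda.le ψa]
  have θξ : 0 ≤ ((d - b) * ((d - ξ) * T a + (ξ - a) * T d) - (d - a) * ((d - ξ) * T b + (ξ - b) * T d)) := by
    have key : (d - a) * ((d - b) * ((d - ξ) * T a + (ξ - a) * T d) - (d - a) * ((d - ξ) * T b + (ξ - b) * T d)) = (d - ξ) * ((d - b) * ((d - a) * T a + (a - a) * T d) - (d - a) * ((d - a) * T b + (a - b) * T d)) + (ξ - a) * ((d - b) * ((d - d) * T a + (d - a) * T d) - (d - a) * ((d - d) * T b + (d - b) * T d)) := by ring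
    have hzd : ((d - b) * ((d - d) * T a + (d - a) * T d) - (d - a) * ((d - d) * T b + (d - b) * T d)) = 0 := by ring
    nlinarith [key, mul_nonneg (by linarith : (0:ℝ) ≤ d - ξ) θa]
  have χξ : 0 ≤ ((c - a) * ((d - ξ) * T a + (ξ - a) * T d) - (d - a) * ((c - ξ) * T a + (ξ - a) * T c)) := by
    have key : (d - b) * ((c - a) * ((d - ξ) * T a + (ξ - a) * T d) - (d - a) * ((c - ξ) * T a + (ξ - a) * T c)) = (c - a) * ((d - b) * ((d - ξ) * T a + (ξ - a) * T d) - (d - a) * ((d - ξ) * T b + (ξ - b) * T d)) - (d - a) * ((d - b) * ((c - ξ) * T a + (ξ - a) * T c) - (c - a) * ((d - ξ) * T b + (ξ - b) * T d)) := by ring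
    nlinarith [key, mul_nonneg hca.le θξ]
  apply sees_of_line had'
  intro u hu
  obtain ⟨hau, hud⟩ := hu
  rcases le_or_gt u ξ with huξ | hξu
  · have huc : u ≤ c := le_trans huξ hξc
    have S1u := S1 u ⟨hau, huc⟩
    have χu : 0 ≤ ((c - a) * ((d - u) * T a + (u - a) * T d) - (d - a) * ((c - u) * T a + (u - a) * T c)) := by
      rcases (hab.trans hbξ).eq_or_lt with haξ | haξ
      · have hua : u = a := le_antisymm (haξ ▸ huξ) hau
        subst hua
        nlinarith []
      · have key : (ξ - a) * ((c - a) * ((d - u) * T a + (u - a) * T d) - (d - a) * ((c - u) * T a + (u - a) * T c)) = (ξ - u) * ((c - a) * ((d - a) * T a + (a - a) * T d) - (d - a) * ((c - a) * T a + (a - a) * T c)) + (u - a) * ((c - a) * ((d - ξ) * T a + (ξ - a) * T d) - (d - a) * ((c - ξ) * T a + (ξ - a) * T c)) := by ring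
        have hz : ((c - a) * ((d - a) * T a + (a - a) * T d) - (d - a) * ((c - a) * T a + (a - a) * T c)) = 0 := by ring
        nlinarith [key, mul_nonneg (by linarith : (0:ℝ) ≤ u - a) χξ, haξ]
    nlinarith [mul_le_mul_of_nonneg_left S1u hda.le, χu]
  · have hbu : b ≤ u := le_trans hbξ hξu.le
    have S2u := S2 u ⟨hbu, hud⟩
    have hξd : ξ < d := lt_of_lt_of_le hξu hud
    have θu : 0 ≤ ((d - b) * ((d - u) * T a + (u - a) * T d) - (d - a) * ((d - u) * T b + (u - b) * T d)) := by
      have key : (d - ξ) * ((d - b) * ((d - u) * T a + (u - a) * T d) - (d - a) * ((d - u) * T b + (u - b) * T d)) = (d - u) * ((d - b) * ((d - ξ) * T a + (ξ - a) * T d) - (d - a) * ((d - ξ) * T b + (ξ - b) * T d)) + (u - ξ) * ((d - b) * ((d - d) * T a + (d - a) * T d) - (d - a) * ((d - d) * T b + (d - b) * T d)) := by ring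
      have hzd : ((d - b) * ((d - d) * T a + (d - a) * T d) - (d - a) * ((d - d) * T b + (d - b) * T d)) = 0 := by ring
      nlinarith [key, mul_nonneg (by linarith : (0:ℝ) ≤ d - u) θξ, hξd]
    nlinarith [mul_le_mul_of_nonneg_left S2u hda.le, θu]

set_option maxHeartbeats 1600000 in
/-- If `v` sees two points of a straight stretch of terrain, it sees every point
in between. -/
lemma interval_sees {T : ℝ → ℝ} {v z1 z z2 : ℝ} (hv : v < z1) (h1 : z1 ≤ z) (h2 : z ≤ z2)
    (haff : ∀ u ∈ Set.Icc z1 z2, (z2 - z1) * T u = (z2 - u) * T z1 + (u - z1) * T z2)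
    (s1 : Sees T v z1) (s2 : Sees T v z2) : Sees T v z := by
  rcases h1.eq_or_lt with h1e | h1s
  · exact h1e ▸ s1
  rcases h2.eq_or_lt with h2e | h2s
  · exact h2e ▸ s2
  have hvz : v < z := lt_trans hv h1s
  have hvz2 : v < z2 := lt_trans hvz h2s
  have hz1v : (0:ℝ) < z1 - v := sub_pos.2 hv
  have hzv : (0:ℝ) < z - v := sub_pos.2 hvz
  have hz2v : (0:ℝ) < z2 - v := sub_pos.2 hvz2
  have h21 : (0:ℝ) < z2 - z1 := sub_pos.2 (lt_trans h1s h2s)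
  have L1 := line_of_sees hv s1
  have L2 := line_of_sees hvz2 s2
  have haffz := haff z ⟨h1, h2⟩
  rcases le_or_gt ((T z1 - T v) * (z - v)) ((T z - T v) * (z1 - v)) with hm | hm
  · -- slope(v,z) ≥ slope(v,z1): use line(v,z1) left of z1, edge between
    apply sees_of_line hvz
    intro u ⟨huv, huz⟩
    rcases le_or_gt u z1 with hu1 | hu1
    · have L1u := L1 u ⟨huv, hu1⟩
      nlinarith [mul_le_mul_of_nonneg_left L1u hzv.le,
        mul_nonneg (sub_nonneg.2 huv) (sub_nonneg.2 hm)]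
    · have haffu := haff u ⟨hu1.le, le_trans huz h2⟩
      -- Δ(x) := (z2-z1)*((z-x)*Tv + (x-v)*Tz) - (z-v)*((z2-x)*Tz1 + (x-z1)*Tz2)
      have key : (z - z1) * ((z2 - z1) * ((z - u) * T v + (u - v) * T z)
            - (z - v) * ((z2 - u) * T z1 + (u - z1) * T z2))
          = (z - u) * ((z2 - z1) * ((z - z1) * T v + (z1 - v) * T z)
            - (z - v) * ((z2 - z1) * T z1))
            + (u - z1) * ((z2 - z1) * ((z - z) * T v + (z - v) * T z)
            - (z - v) * ((z2 - z) * T z1 + (z - z1) * T z2)) := by ring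
      have e0 : (z2 - z1) * ((z - z) * T v + (z - v) * T z)
          - (z - v) * ((z2 - z) * T z1 + (z - z1) * T z2) = 0 := by
        linear_combination (z - v) * haffz
      have e1 : 0 ≤ (z2 - z1) * ((z - z1) * T v + (z1 - v) * T z)
          - (z - v) * ((z2 - z1) * T z1) := by
        nlinarith [mul_nonneg h21.le (sub_nonneg.2 hm)]
      have hΔu : 0 ≤ (z2 - z1) * ((z - u) * T v + (u - v) * T z)
          - (z - v) * ((z2 - u) * T z1 + (u - z1) * T z2) := by
        nlinarith [key, e0, mul_nonneg (sub_nonneg.2 huz) e1, sub_pos.2 h1s, hu1]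
      -- goal: (z-v)*T u ≤ (z-u)*Tv + (u-v)*Tz, using haffu to replace Tu
      nlinarith [hΔu, mul_le_mul_of_nonneg_left (le_of_eq haffu) hzv.le, haffu, h21]
  · -- slope(v,z) < slope(v,z1) forces slope(v,z) ≥ slope(v,z2): use line(v,z2) throughout
    have med : (T z2 - T v) * (z - v) ≤ (T z - T v) * (z2 - v) := by
      have key : (z - z1) * ((T z - T v) * (z2 - v)) - (z - z1) * ((T z2 - T v) * (z - v))
          = (z2 - z) * ((T z1 - T v) * (z - v) - (T z - T v) * (z1 - v))
            + (z - v) * ((z2 - z1) * T z - ((z2 - z) * T z1 + (z - z1) * T z2)) := by ring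
      have e0 : (z2 - z1) * T z - ((z2 - z) * T z1 + (z - z1) * T z2) = 0 := by
        linear_combination haffz
      nlinarith [key, e0, mul_nonneg (sub_nonneg.2 h2s.le) (sub_nonneg.2 hm.le),
        sub_pos.2 h1s]
    apply sees_of_line hvz
    intro u ⟨huv, huz⟩
    have L2u := L2 u ⟨huv, le_trans huz h2⟩
    nlinarith [mul_le_mul_of_nonneg_left L2u hzv.le,
      mul_nonneg (sub_nonneg.2 huv) (sub_nonneg.2 med)]

/-- Any two points of a straight (affine) stretch of the terrain see each other. -/
lemma sees_edge {T : ℝ → ℝ} {A B : ℝ} (hAB : A < B)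
    (haff : ∀ u ∈ Set.Icc A B, (B - A) * T u = (B - u) * T A + (u - A) * T B)
    {z1 z2 : ℝ} (h1 : z1 ∈ Set.Icc A B) (h2 : z2 ∈ Set.Icc A B) : Sees T z1 z2 := by
  intro t ⟨ht0, ht1⟩
  have hBA : (0:ℝ) < B - A := sub_pos.2 hAB
  have hw : (1 - t) * z1 + t * z2 ∈ Set.Icc A B := by
    constructor <;> nlinarith [h1.1, h1.2, h2.1, h2.2]
  have e := haff _ hw
  have e1 := haff z1 h1
  have e2 := haff z2 h2
  have g : (B - A) * T ((1 - t) * z1 + t * z2) = (B - A) * ((1 - t) * T z1 + t * T z2) := by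
    linear_combination e - (1 - t) * e1 - t * e2
  exact le_of_eq (mul_left_cancel₀ hBA.ne' g)

open Classical in
/-- Key construction: a point `p` in the left part of the edge `(A, B)` such that any
potential guard position `v ∈ V`, `v ≤ A`, that sees `p` sees the whole open edge. -/
lemma exists_left_probe (T : ℝ → ℝ) {A B : ℝ} (hAB : A < B)
    (haff : ∀ u ∈ Set.Icc A B, (B - A) * T u = (B - u) * T A + (u - A) * T B)
    (V : Finset ℝ) :
    ∃ p, A < p ∧ p ≤ (A + B) / 2 ∧
      ∀ v ∈ V, v ≤ A → Sees T v p → ∀ z ∈ Set.Ioo A B, Sees T v z := by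
  set Sv : ℝ → Set ℝ := fun v => {z | z ∈ Set.Ioo A B ∧ Sees T v z} with hSv
  set crit : ℝ → ℝ := fun v =>
    if (Sv v).Nonempty ∧ A < sInf (Sv v) then sInf (Sv v) else B with hcrit
  have hcritA : ∀ v, A < crit v := by
    intro v
    simp only [hcrit]
    split
    · next h => exact h.2
    · exact hAB
  set c : ℝ := if hV : V.Nonempty then min ((V.inf' hV crit)) B else B with hc
  have hcA : A < c := by
    simp only [hc]
    split
    · next hV => exact lt_min ((Finset.lt_inf'_iff hV).2 fun v _ => hcritA v) hAB
    · exact hAB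
  have hcB : c ≤ B := by
    simp only [hc]; split
    · exact min_le_right _ _
    · exact le_rfl
  refine ⟨(A + c) / 2, by linarith, by linarith, ?_⟩
  intro v hvV hvA hvp
  have hpA : A < (A + c) / 2 := by linarith
  have hpc : (A + c) / 2 < c := by linarith
  have hpB : (A + c) / 2 < B := by linarith
  have hpmem : (A + c) / 2 ∈ Sv v := ⟨⟨hpA, hpB⟩, hvp⟩
  have hne : (Sv v).Nonempty := ⟨_, hpmem⟩
  have hbdd : BddBelow (Sv v) := ⟨A, fun z hz => hz.1.1.le⟩
  have hInfA : sInf (Sv v) ≤ A := by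
    by_contra hcon
    push_neg at hcon
    have : crit v = sInf (Sv v) := by
      simp only [hcrit]
      exact if_pos ⟨hne, hcon⟩
    have h1 : crit v ≤ (A + c) / 2 := this ▸ csInf_le hbdd hpmem
    have h2 : c ≤ crit v := by
      have hV : V.Nonempty := ⟨v, hvV⟩
      simp only [hc, dif_pos hV]
      exact le_trans (min_le_left _ _) (Finset.inf'_le crit hvV)
    linarith
  intro z hz
  rcases le_or_gt ((A + c) / 2) z with hpz | hzp
  · -- z right of p : order claim through A
    exact order_claim_s3 hvA hpA hpz hvp (sees_edge hAB haff ⟨le_rfl, hAB.le⟩ ⟨hz.1.le, hz.2.le⟩)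
  · -- z left of p : find a seen point y < z, use the interval property
    have : sInf (Sv v) < z := lt_of_le_of_lt hInfA hz.1
    obtain ⟨y, hy, hyz⟩ := (csInf_lt_iff hbdd hne).1 this
    have haff' : ∀ u ∈ Set.Icc y ((A + c) / 2),
        ((A + c) / 2 - y) * T u = ((A + c) / 2 - u) * T y + (u - y) * T ((A + c) / 2) := by
      intro u hu
      have huAB : u ∈ Set.Icc A B := ⟨le_trans hy.1.1.le hu.1, le_trans hu.2 hpB.le⟩
      have ey := haff y ⟨hy.1.1.le, hy.1.2.le⟩
      have ep := haff ((A + c) / 2) ⟨hpA.le, hpB.le⟩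
      have eu := haff u huAB
      have hBA : (0:ℝ) < B - A := sub_pos.2 hAB
      -- all three points on the same line: eliminate T A, T B
      -- (B-A) * [goal] is a linear combination of ey, ep, eu
      have g : (B - A) * (((A + c) / 2 - y) * T u)
          = (B - A) * (((A + c) / 2 - u) * T y + (u - y) * T ((A + c) / 2)) := by
        linear_combination ((A + c) / 2 - y) * eu - ((A + c) / 2 - u) * ey - (u - y) * ep
      exact mul_left_cancel₀ hBA.ne' g
    exact interval_sees (lt_of_le_of_lt hvA hy.1.1) hyz.le hzp.le haff' hy.2 hvp

/-- **Lemma 2 (discretization of one edge).** For each edge of the terrain there exist two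
interior points `p ≤ q` of the edge such that any vertex set `S` that two-sided guards all
vertices together with `p` and `q` two-sided guards the whole closed edge. -/
theorem edge_discretization {n : ℕ} (Ter : Terrain n) (hn : 1 ≤ n) (j : Fin n) :
    ∃ p q : ℝ, Ter.x j.castSucc < p ∧ p ≤ q ∧ q < Ter.x j.succ ∧
      ∀ S : Set ℝ, S ⊆ Set.range Ter.x →
        (∀ v ∈ Set.range Ter.x, TwoSidedGuards Ter.T S v) →
        TwoSidedGuards Ter.T S p → TwoSidedGuards Ter.T S q →
        ∀ z ∈ Set.Icc (Ter.x j.castSucc) (Ter.x j.succ), TwoSidedGuards Ter.T S z := by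

  set A : ℝ := Ter.x j.castSucc with hA
  set B : ℝ := Ter.x j.succ with hB
  have hAB : A < B := Ter.mono (Fin.castSucc_lt_succ : j.castSucc < j.succ)
  have hBA : (0:ℝ) < B - A := sub_pos.2 hAB
  -- the edge is affine, in "line" form
  have haff : ∀ u ∈ Set.Icc A B, (B - A) * Ter.T u = (B - u) * Ter.T A + (u - A) * Ter.T B := by
    intro u hu
    have ht : (u - A) / (B - A) ∈ Set.Icc (0:ℝ) 1 := by
      constructor
      · exact div_nonneg (by linarith [hu.1]) hBA.le
      · rw [div_le_one hBA]; linarith [hu.2]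
    have e := Ter.affine j _ ht
    have key : (1 - (u - A) / (B - A)) * Ter.x j.castSucc + ((u - A) / (B - A)) * Ter.x j.succ
        = u := by
      rw [← hA, ← hB]; field_simp; ring
    rw [key] at e
    rw [e]
    field_simp
    rw [← hA, ← hB]; ring
  -- mirrored terrain
  set T' : ℝ → ℝ := fun u => Ter.T (-u) with hT'
  have hAB' : -B < -A := neg_lt_neg hAB
  have haff' : ∀ u ∈ Set.Icc (-B) (-A),
      (-A - -B) * T' u = (-A - u) * T' (-B) + (u - -B) * T' (-A) := by
    intro u hu
    have hu' : -u ∈ Set.Icc A B := ⟨by linarith [hu.2], by linarith [hu.1]⟩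
    have e := haff (-u) hu'
    simp only [hT', neg_neg]
    linarith [e]
  set V : Finset ℝ := Finset.image Ter.x Finset.univ with hV
  obtain ⟨p, hpA, hpHalf, hpProbe⟩ := exists_left_probe Ter.T hAB haff V
  obtain ⟨p', hp'B, hp'Half, hq'Probe⟩ :=
    exists_left_probe T' hAB' haff' (Finset.image Neg.neg V)
  refine ⟨p, -p', hpA, by linarith, by linarith, ?_⟩
  intro S hSsub hvert hp hq z hz
  rcases hz.1.eq_or_lt with hzA | hzA
  · exact hzA ▸ hvert A ⟨j.castSucc, rfl⟩
  rcases hz.2.eq_or_lt with hzB | hzB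
  · exact hzB ▸ hvert B ⟨j.succ, rfl⟩
  have hzIoo : z ∈ Set.Ioo A B := ⟨hzA, hzB⟩
  constructor
  · -- left guard
    obtain ⟨v, hvS, hvle, hvsee⟩ := hp.1
    obtain ⟨i, hi⟩ := hSsub hvS
    have hvV : v ∈ V := Finset.mem_image.2 ⟨i, Finset.mem_univ i, hi⟩
    have hvA : v ≤ A := by
      have h1 : Ter.x i < Ter.x j.succ := by
        rw [hi]; exact lt_of_le_of_lt hvle (by linarith)
      have h2 : i < j.succ := Ter.mono.lt_iff_lt.1 h1
      have h3 : i ≤ j.castSucc := by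
        rw [Fin.le_def]
        rw [Fin.lt_def] at h2
        simp only [Fin.val_succ, Fin.coe_castSucc] at h2 ⊢
        omega
      rw [← hi]
      exact Ter.mono.monotone h3
    exact ⟨v, hvS, le_trans hvA hzIoo.1.le, hpProbe v hvV hvA hvsee z hzIoo⟩
  · -- right guard
    obtain ⟨w, hwS, hwle, hwsee⟩ := hq.2
    obtain ⟨i, hi⟩ := hSsub hwS
    have hwV : -w ∈ Finset.image Neg.neg V := by
      refine Finset.mem_image.2 ⟨w, Finset.mem_image.2 ⟨i, Finset.mem_univ i, hi⟩, rfl⟩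
    have hwB : B ≤ w := by
      have h1 : Ter.x j.castSucc < Ter.x i := by
        rw [hi]; exact lt_of_lt_of_le (by linarith : A < -p') hwle
      have h2 : j.castSucc < i := Ter.mono.lt_iff_lt.1 h1
      have h3 : j.succ ≤ i := by
        rw [Fin.le_def]
        rw [Fin.lt_def] at h2
        simp only [Fin.val_succ, Fin.coe_castSucc] at h2 ⊢
        omega
      rw [← hi]
      exact Ter.mono.monotone h3
    have hwsee' : Sees T' (-w) p' := by
      have : Sees T' (-w) (- -p') := sees_neg.2 hwsee
      simpa using this
    have hseez : Sees T' (-w) (-z) :=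
      hq'Probe (-w) hwV (by linarith) hwsee' (-z) ⟨by linarith [hzIoo.2], by linarith [hzIoo.1]⟩
    exact ⟨w, hwS, le_trans hzIoo.2.le hwB, sees_neg.1 hseez⟩
end

section
/- (Lemma 9.) Let v be a vertex of the terrain, let x be a point of the terrain with v < x, and let L(v) be the leftmost vertex that sees v, with L(v) < v. If v sees x and L(v) does not see x, then v = L(x), i.e., v is the leftmost vertex that sees x. -/
lemma line_between {c1 m1 c2 m2 a b x : ℝ} (hab : a < b) (hax : a ≤ x) (hxb : x ≤ b)
    (ha : c1 + m1 * a ≤ c2 + m2 * a) (hb : c1 + m1 * b ≤ c2 + m2 * b) :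
    c1 + m1 * x ≤ c2 + m2 * x := by
  nlinarith [mul_nonneg (sub_nonneg.2 ha) (sub_nonneg.2 hxb),
    mul_nonneg (sub_nonneg.2 hb) (sub_nonneg.2 hax)]

lemma line_left {c1 m1 c2 m2 u v p : ℝ} (huv : u ≤ v) (hvp : v < p)
    (hv : c1 + m1 * v ≤ c2 + m2 * v) (hp : c2 + m2 * p ≤ c1 + m1 * p) :
    c1 + m1 * u ≤ c2 + m2 * u := by
  nlinarith [mul_nonneg (sub_nonneg.2 hv) (sub_nonneg.2 (le_trans huv hvp.le)),
    mul_nonneg (sub_nonneg.2 hp) (sub_nonneg.2 huv)]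

lemma line_ext {c1 m1 c2 m2 a b c : ℝ} (hab : a < b) (hbc : b < c)
    (he : c1 + m1 * a = c2 + m2 * a) (hlt : c1 + m1 * b < c2 + m2 * b) :
    c1 + m1 * c < c2 + m2 * c := by
  nlinarith [mul_pos (sub_pos.2 hlt) (sub_pos.2 (lt_trans hab hbc))]

lemma line_ext2 {c1 m1 c2 m2 a b c : ℝ} (hab : a < b) (hbc : b < c)
    (he : c1 + m1 * b = c2 + m2 * b) (ha : c1 + m1 * a ≤ c2 + m2 * a) :
    c2 + m2 * c ≤ c1 + m1 * c := by
  nlinarith [mul_nonneg (sub_nonneg.2 ha) (sub_nonneg.2 (le_of_lt hbc))]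

lemma exists_line (T : ℝ → ℝ) {a b : ℝ} (hab : a < b) :
    ∃ c m : ℝ, c + m * a = T a ∧ c + m * b = T b := by
  have h : b - a ≠ 0 := sub_ne_zero.2 hab.ne'
  refine ⟨(b * T a - a * T b) / (b - a), (T b - T a) / (b - a), ?_, ?_⟩ <;>
  · field_simp
    ring

lemma sees_iff {T : ℝ → ℝ} {a b c m : ℝ} (hab : a < b)
    (hca : c + m * a = T a) (hcb : c + m * b = T b) :
    Sees T a b ↔ ∀ x ∈ Set.Icc a b, T x ≤ c + m * x := by
  constructor
  · intro hs x hx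
    have hba : (0:ℝ) < b - a := sub_pos.2 hab
    set t := (x - a) / (b - a) with ht
    have ht0 : 0 ≤ t := div_nonneg (sub_nonneg.2 hx.1) hba.le
    have ht1 : t ≤ 1 := by
      rw [div_le_one hba]; linarith [hx.2]
    have hxx : (1 - t) * a + t * b = x := by
      have h' : t * (b - a) = x - a := by rw [ht]; exact div_mul_cancel₀ _ hba.ne'
      linear_combination h'
    have := hs t ⟨ht0, ht1⟩
    rw [hxx] at this
    calc T x ≤ (1 - t) * T a + t * T b := this
      _ = c + m * x := by rw [← hca, ← hcb, ← hxx]; ring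
  · intro h t ht
    have hx1 : a ≤ (1 - t) * a + t * b := by nlinarith [ht.1, ht.2]
    have hx2 : (1 - t) * a + t * b ≤ b := by nlinarith [ht.1, ht.2]
    calc T ((1 - t) * a + t * b) ≤ c + m * ((1 - t) * a + t * b) := h _ ⟨hx1, hx2⟩
      _ = (1 - t) * T a + t * T b := by rw [← hca, ← hcb]; ring

lemma edge_cover {n : ℕ} (Ter : Terrain n) {i k : Fin (n+1)} (hik : i < k) {z : ℝ}
    (hzi : Ter.x i ≤ z) (hzk : z ≤ Ter.x k) :
    ∃ j : Fin n, i ≤ j.castSucc ∧ j.succ ≤ k ∧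
      Ter.x j.castSucc ≤ z ∧ z ≤ Ter.x j.succ := by
  classical
  set M : Finset (Fin (n+1)) := Finset.univ.filter (fun m => m < k ∧ Ter.x m ≤ z) with hM
  have hmem : ∀ m : Fin (n+1), m ∈ M ↔ m < k ∧ Ter.x m ≤ z := by
    intro m; rw [hM, Finset.mem_filter]; simp
  have hiM : i ∈ M := (hmem i).2 ⟨hik, hzi⟩
  have hMne : M.Nonempty := ⟨i, hiM⟩
  set mx := M.max' hMne with hmx
  obtain ⟨hmk, hmz⟩ := (hmem mx).1 (M.max'_mem hMne)
  have hmn : (mx : ℕ) < n := by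
    have h1 : (mx : ℕ) < (k : ℕ) := hmk
    have h2 : (k : ℕ) < n + 1 := k.isLt
    omega
  refine ⟨⟨(mx : ℕ), hmn⟩, ?_, ?_, ?_, ?_⟩
  · have h1 : i ≤ mx := M.le_max' i hiM
    rw [Fin.le_def] at h1 ⊢
    exact h1
  · rw [Fin.le_def]
    exact hmk
  · simpa [Fin.castSucc] using hmz
  · by_contra h
    push_neg at h
    set j : Fin n := ⟨(mx : ℕ), hmn⟩ with hj
    have hsk : j.succ < k := by
      have h1 : Ter.x j.succ < Ter.x k := lt_of_lt_of_le h hzk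
      exact Ter.mono.lt_iff_lt.1 h1
    have hsM : j.succ ∈ M := (hmem _).2 ⟨hsk, h.le⟩
    have h2 : j.succ ≤ mx := M.le_max' _ hsM
    rw [Fin.le_def] at h2
    have h3 : (mx : ℕ) + 1 ≤ (mx : ℕ) := by rw [Fin.val_succ] at h2; exact h2
    omega

lemma vertex_bound {n : ℕ} (Ter : Terrain n) {i k : Fin (n+1)} (hik : i < k) {c m : ℝ}
    (hvert : ∀ jm : Fin (n+1), i ≤ jm → jm ≤ k → Ter.T (Ter.x jm) ≤ c + m * Ter.x jm) :
    ∀ z ∈ Set.Icc (Ter.x i) (Ter.x k), Ter.T z ≤ c + m * z := by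
  intro z hz
  obtain ⟨j, hij, hjk, hza, hzb⟩ := edge_cover Ter hik hz.1 hz.2
  set a := Ter.x j.castSucc with ha
  set b := Ter.x j.succ with hb
  have hab : a < b := Ter.mono (Fin.castSucc_lt_succ : j.castSucc < j.succ)
  have hba : (0:ℝ) < b - a := sub_pos.2 hab
  set t := (z - a) / (b - a) with htdef
  have ht0 : 0 ≤ t := div_nonneg (sub_nonneg.2 hza) hba.le
  have ht1 : t ≤ 1 := by rw [div_le_one hba]; linarith
  have hz' : (1 - t) * a + t * b = z := by
    have h' : t * (b - a) = z - a := by rw [htdef]; exact div_mul_cancel₀ _ hba.ne'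
    linear_combination h'
  have haff := Ter.affine j t ⟨ht0, ht1⟩
  rw [← ha, ← hb, hz'] at haff
  have h1 := hvert j.castSucc hij (le_trans (Fin.castSucc_lt_succ : j.castSucc < j.succ).le hjk)
  have h2 := hvert j.succ (le_trans hij (Fin.castSucc_lt_succ : j.castSucc < j.succ).le) hjk
  rw [← ha] at h1
  rw [← hb] at h2
  rw [haff]
  have e : (1 - t) * (c + m * a) + t * (c + m * b) = c + m * z := by rw [← hz']; ring
  nlinarith [mul_le_mul_of_nonneg_left h1 (by linarith : (0:ℝ) ≤ 1 - t),
    mul_le_mul_of_nonneg_left h2 ht0]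

/-- **Lemma 9.** Let `v` be a vertex, `p` a point of the terrain with `v < p`, and `l = L(v)`
the leftmost vertex seeing `v`, with `l < v`. If `v` sees `p` and `l` does not see `p`,
then `v` is the leftmost vertex seeing `p`. -/
theorem leftmost_visible_vertex {n : ℕ} (Ter : Terrain n) (hn : 1 ≤ n)
    (v : ℝ) (hv : v ∈ Set.range Ter.x)
    (p : ℝ) (hp : p ∈ Set.Icc (Ter.x 0) (Ter.x (Fin.last n))) (hvp : v < p)
    (l : ℝ) (hlV : l ∈ Set.range Ter.x)
    (hl_sees : Sees Ter.T l v)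
    (hl_min : ∀ u ∈ Set.range Ter.x, u < l → ¬ Sees Ter.T u v)
    (hlv : l < v)
    (h_sees : Sees Ter.T v p)
    (h_not : ¬ Sees Ter.T l p) :
    Sees Ter.T v p ∧ ∀ u ∈ Set.range Ter.x, u < v → ¬ Sees Ter.T u p := by
  classical
  obtain ⟨cB, mB, hBl, hBv⟩ := exists_line Ter.T hlv
  have hlp : l < p := hlv.trans hvp
  obtain ⟨cD, mD, hDl, hDp⟩ := exists_line Ter.T hlp
  obtain ⟨cC, mC, hCv, hCp⟩ := exists_line Ter.T hvp
  have hBIcc : ∀ x ∈ Set.Icc l v, Ter.T x ≤ cB + mB * x := (sees_iff hlv hBl hBv).1 hl_sees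
  have hCIcc : ∀ x ∈ Set.Icc v p, Ter.T x ≤ cC + mC * x := (sees_iff hvp hCv hCp).1 h_sees
  -- Step 1: `v` lies strictly above the chord `lp`.
  have hTvD : cD + mD * v < Ter.T v := by
    by_contra hcon
    push_neg at hcon
    apply h_not
    rw [sees_iff hlp hDl hDp]
    intro x hx
    rcases le_total x v with hxv | hvx
    · have h1 := hBIcc x ⟨hx.1, hxv⟩
      have h2 : cB + mB * x ≤ cD + mD * x :=
        line_between hlv hx.1 hxv (le_of_eq (hBl.trans hDl.symm)) (by rw [hBv]; exact hcon)
      linarith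
    · have h1 := hCIcc x ⟨hvx, hx.2⟩
      have h2 : cC + mC * x ≤ cD + mD * x :=
        line_between hvp hvx hx.2 (by rw [hCv]; exact hcon) (le_of_eq (hCp.trans hDp.symm))
      linarith
  -- Step 2: `p` lies strictly below the extension of the chord `lv`.
  have hBp : Ter.T p < cB + mB * p := by
    have h := line_ext hlv hvp (hDl.trans hBl.symm) (by rw [hBv]; exact hTvD)
    rw [hDp] at h
    exact h
  refine ⟨h_sees, ?_⟩
  intro u hu huv hSu
  obtain ⟨iu, hxiu⟩ := hu
  have hup : u < p := huv.trans hvp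
  obtain ⟨cG, mG, hGu, hGp⟩ := exists_line Ter.T hup
  have hGIcc : ∀ x ∈ Set.Icc u p, Ter.T x ≤ cG + mG * x := (sees_iff hup hGu hGp).1 hSu
  rcases lt_trichotomy u l with hul | heq | hlu
  · -- u < l : exhibit a vertex left of l that sees v.
    have hGv2 : Ter.T v ≤ cG + mG * v := hGIcc v ⟨huv.le, hvp.le⟩
    have hBu : cB + mB * u ≤ Ter.T u := by
      have h1 : cB + mB * v ≤ cG + mG * v := by rw [hBv]; exact hGv2
      have h2 : cG + mG * p ≤ cB + mB * p := by rw [hGp]; exact hBp.le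
      have h := line_left huv.le hvp h1 h2
      rw [hGu] at h
      exact h
    obtain ⟨il, hxil⟩ := hlV
    set S : Finset (Fin (n+1)) :=
      Finset.univ.filter (fun j => u ≤ Ter.x j ∧ Ter.x j < l ∧ cB + mB * Ter.x j ≤ Ter.T (Ter.x j))
        with hS
    have hmemS : ∀ j : Fin (n+1), j ∈ S ↔
        u ≤ Ter.x j ∧ Ter.x j < l ∧ cB + mB * Ter.x j ≤ Ter.T (Ter.x j) := by
      intro j; rw [hS, Finset.mem_filter]; simp
    have hiuS : iu ∈ S := (hmemS iu).2 (by rw [hxiu]; exact ⟨le_refl u, hul, hBu⟩)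
    have hSne : S.Nonempty := ⟨iu, hiuS⟩
    set js := S.max' hSne with hjs
    obtain ⟨hujs, hjsl, hBjs⟩ := (hmemS js).1 (S.max'_mem hSne)
    set w := Ter.x js with hw
    have hwl : w < l := hjsl
    have hwv : w < v := lt_trans hwl hlv
    obtain ⟨cF, mF, hFw, hFv⟩ := exists_line Ter.T hwv
    have hBF : ∀ x ∈ Set.Icc w v, cB + mB * x ≤ cF + mF * x := fun x hx =>
      line_between hwv hx.1 hx.2 (by rw [hFw]; exact hBjs) (le_of_eq (hBv.trans hFv.symm))
    have hjsil : js < il := by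
      have h1 : Ter.x js < Ter.x il := by rw [hxil]; exact hjsl
      exact Ter.mono.lt_iff_lt.1 h1
    have hWsees : Sees Ter.T w v := by
      rw [sees_iff hwv hFw hFv]
      intro z hz
      rcases le_total z l with hzl | hlz
      · have hvb : ∀ jm : Fin (n+1), js ≤ jm → jm ≤ il →
            Ter.T (Ter.x jm) ≤ cF + mF * Ter.x jm := by
          intro jm h1 h2
          rcases eq_or_lt_of_le h1 with hrfl | h1'
          · rw [← hrfl, ← hw]
            exact le_of_eq hFw.symm
          · rcases eq_or_lt_of_le h2 with hrfl | h2'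
            · rw [hrfl, hxil, ← hBl]
              exact hBF l ⟨hwl.le, hlv.le⟩
            · have hx1 : w < Ter.x jm := Ter.mono h1'
              have hx2 : Ter.x jm < l := by rw [← hxil]; exact Ter.mono h2'
              have hnot : ¬ (cB + mB * Ter.x jm ≤ Ter.T (Ter.x jm)) := by
                intro hcon
                have hjmS : jm ∈ S := (hmemS jm).2
                  ⟨le_trans hujs hx1.le, hx2, hcon⟩
                have hle := S.le_max' jm hjmS
                exact absurd hle (not_le.2 h1')
              push_neg at hnot
              have h3 := hBF (Ter.x jm) ⟨hx1.le, (hx2.trans hlv).le⟩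
              linarith
        have hz' : z ∈ Set.Icc (Ter.x js) (Ter.x il) := by
          rw [hxil, ← hw]
          exact ⟨hz.1, hzl⟩
        exact vertex_bound Ter hjsil hvb z hz'
      · have h1 := hBIcc z ⟨hlz, hz.2⟩
        have h2 := hBF z ⟨hz.1, hz.2⟩
        linarith
    exact hl_min w ⟨js, hw.symm⟩ hwl hWsees
  · -- u = l
    rw [heq] at hSu
    exact h_not hSu
  · -- l < u : derive that l sees p, contradiction.
    have hBu : Ter.T u ≤ cB + mB * u := hBIcc u ⟨hlu.le, huv.le⟩
    have hGv : Ter.T v ≤ cG + mG * v := hGIcc v ⟨huv.le, hvp.le⟩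
    rcases eq_or_lt_of_le hGv with heqv | hltv
    · have he : cG + mG * v = cB + mB * v := by rw [hBv, ← heqv]
      have ha : cG + mG * u ≤ cB + mB * u := by rw [hGu]; exact hBu
      have h := line_ext2 huv hvp he ha
      rw [hGp] at h
      linarith
    · have hBGv : cB + mB * v < cG + mG * v := by rw [hBv]; exact hltv
      have hBGu : cG + mG * u ≤ cB + mB * u := by rw [hGu]; exact hBu
      have hm : mB - mG < 0 := by
        by_contra hcon
        push_neg at hcon
        nlinarith [mul_le_mul_of_nonneg_left huv.le hcon]
      set q := -((cB - cG) / (mB - mG)) with hq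
      have hm0 : mB - mG ≠ 0 := hm.ne
      have hdq : cB + mB * q = cG + mG * q := by
        rw [hq]
        field_simp
        ring
      have huq : u ≤ q := by
        by_contra hcon
        push_neg at hcon
        nlinarith [mul_neg_of_neg_of_pos hm (sub_pos.2 hcon)]
      have hqv : q < v := by
        by_contra hcon
        push_neg at hcon
        nlinarith [mul_nonneg (neg_nonneg.2 hm.le) (neg_nonneg.2 (sub_nonpos.2 hcon))]
      have hlq : l < q := lt_of_lt_of_le hlu huq
      have hqp : q < p := hqv.trans hvp
      have hGBp : cB + mB * p < cG + mG * p := line_ext hqv hvp hdq hBGv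
      have hBqDq : cB + mB * q ≤ cD + mD * q := by
        by_contra hcon
        push_neg at hcon
        have h := line_ext hlq hqp (hDl.trans hBl.symm) hcon
        rw [hDp] at h
        rw [hGp] at hGBp
        linarith
      apply h_not
      rw [sees_iff hlp hDl hDp]
      intro x hx
      rcases le_total x q with hxq | hqx
      · have h1 := hBIcc x ⟨hx.1, hxq.trans hqv.le⟩
        have h2 : cB + mB * x ≤ cD + mD * x :=
          line_between hlq hx.1 hxq (le_of_eq (hBl.trans hDl.symm)) hBqDq
        linarith
      · have h1 := hGIcc x ⟨huq.trans hqx, hx.2⟩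
        have h2 : cG + mG * x ≤ cD + mD * x :=
          line_between hqp hqx hx.2 (by rw [← hdq]; exact hBqDq) (le_of_eq (hGp.trans hDp.symm))
        linarith
end

section
/- (Supporting claim used in the discretization.) Let v, p, q be points of the terrain with p ≤ q, and suppose T is affine on the interval [p, q]. If v sees p and v sees q, then v sees every point of the interval [p, q]. -/
set_option maxHeartbeats 1600000 in
/-- **Supporting claim for the discretization.** If `T` is affine on `[p, q]` and a point `v`
of the terrain sees both `p` and `q`, then `v` sees every point of `[p, q]`. -/
theorem sees_segment {n : ℕ} (Ter : Terrain n) (hn : 1 ≤ n)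
    (v p q : ℝ)
    (hv : v ∈ Set.Icc (Ter.x 0) (Ter.x (Fin.last n)))
    (hp : p ∈ Set.Icc (Ter.x 0) (Ter.x (Fin.last n)))
    (hq : q ∈ Set.Icc (Ter.x 0) (Ter.x (Fin.last n)))
    (hpq : p ≤ q)
    (haff : ∀ t ∈ Set.Icc (0 : ℝ) 1,
      Ter.T ((1 - t) * p + t * q) = (1 - t) * Ter.T p + t * Ter.T q)
    (hvp : Sees Ter.T v p) (hvq : Sees Ter.T v q) :
    ∀ z ∈ Set.Icc p q, Sees Ter.T v z := by
  intro z hz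
  rcases eq_or_lt_of_le hpq with rfl | hpq'
  · have hzp : z = p := le_antisymm hz.2 hz.1
    rw [hzp]; exact hvp
  -- `p < q`.  Let `L` be the affine function agreeing with `T` on `[p, q]`.
  have hqp : (0 : ℝ) < q - p := by linarith
  have hne : q - p ≠ 0 := ne_of_gt hqp
  set L : ℝ → ℝ := fun x => Ter.T p + (x - p) * (Ter.T q - Ter.T p) / (q - p) with hL
  have hLaff : ∀ a b s : ℝ, L ((1 - s) * a + s * b) = (1 - s) * L a + s * L b := by
    intro a b s
    simp only [hL]
    field_simp
    ring
  have hTL : ∀ x ∈ Set.Icc p q, Ter.T x = L x := by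
    intro x hx
    have h1 : (0 : ℝ) ≤ (x - p) / (q - p) := div_nonneg (by linarith [hx.1]) hqp.le
    have h2 : (x - p) / (q - p) ≤ 1 := by
      rw [div_le_one hqp]; linarith [hx.2]
    have key := haff ((x - p) / (q - p)) ⟨h1, h2⟩
    have hx' : (1 - (x - p) / (q - p)) * p + (x - p) / (q - p) * q = x := by
      field_simp
      ring
    rw [hx'] at key
    rw [key]
    simp only [hL]
    field_simp
    ring
  clear_value L
  have hLp : Ter.T p = L p := hTL p ⟨le_refl _, hpq⟩
  have hLq : Ter.T q = L q := hTL q ⟨hpq, le_refl _⟩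
  have hLz : Ter.T z = L z := hTL z hz
  -- Key fact: `T v ≥ L v`.
  have hKey : L v ≤ Ter.T v := by
    rcases lt_or_ge v p with hvlt | hvge
    · -- `v < p` : use that `v` sees `q`, chord at `p`.
      have hqv : (0 : ℝ) < q - v := by linarith
      set u : ℝ := (p - v) / (q - v) with hu
      have hu0 : (0 : ℝ) ≤ u := div_nonneg (by linarith) hqv.le
      have hu1 : u < 1 := by rw [hu, div_lt_one hqv]; linarith
      have hpt : (1 - u) * v + u * q = p := by
        rw [hu]; field_simp; ring
      have hchord := hvq u ⟨hu0, hu1.le⟩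
      rw [hpt] at hchord
      have haff2 : L p = (1 - u) * L v + u * L q := by
        rw [← hpt]; exact hLaff v q u
      have h3 : (1 - u) * L v ≤ (1 - u) * Ter.T v := by nlinarith [hchord, haff2, hLp, hLq]
      exact (mul_le_mul_iff_right₀ (by linarith)).mp h3
    · rcases le_or_gt v q with hvle | hvgt
      · exact le_of_eq (hTL v ⟨hvge, hvle⟩).symm
      · -- `v > q` : use that `v` sees `p`, chord at `q`.
        have hvpd : (0 : ℝ) < v - p := by linarith
        set u : ℝ := (v - q) / (v - p) with hu
        have hu0 : (0 : ℝ) ≤ u := div_nonneg (by linarith) hvpd.le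
        have hu1 : u < 1 := by rw [hu, div_lt_one hvpd]; linarith
        have hpt : (1 - u) * v + u * p = q := by
          rw [hu]; field_simp; ring
        have hchord := hvp u ⟨hu0, hu1.le⟩
        rw [hpt] at hchord
        have haff2 : L q = (1 - u) * L v + u * L p := by
          rw [← hpt]; exact hLaff v p u
        have h3 : (1 - u) * L v ≤ (1 - u) * Ter.T v := by nlinarith [hchord, haff2, hLp, hLq]
        exact (mul_le_mul_iff_right₀ (by linarith)).mp h3
  -- Now prove the visibility of `z` from `v`.
  intro t ht
  set x : ℝ := (1 - t) * v + t * z with hx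
  have hA2 : L x = (1 - t) * L v + t * L z := hLaff v z t
  rcases lt_or_ge x p with hxp | hxge
  · -- `x < p`, so `v < p` and `v ≤ x`.
    have hvltp : v < p := by
      by_contra h
      push_neg at h
      have := mul_nonneg (by linarith [ht.2] : (0:ℝ) ≤ 1 - t) (by linarith : (0:ℝ) ≤ v - p)
      have := mul_nonneg ht.1 (by linarith [hz.1] : (0:ℝ) ≤ z - p)
      simp only [hx] at hxp
      nlinarith
    have hvx : v ≤ x := by
      have := mul_nonneg ht.1 (by linarith [hz.1] : (0:ℝ) ≤ z - v)
      simp only [hx]; nlinarith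
    have hpv : (0 : ℝ) < p - v := by linarith
    set u : ℝ := (x - v) / (p - v) with hu
    have hu0 : (0 : ℝ) ≤ u := div_nonneg (by linarith) hpv.le
    have hu1 : u ≤ 1 := by rw [hu, div_le_one hpv]; linarith
    have hpt : (1 - u) * v + u * p = x := by
      rw [hu]; field_simp; ring
    have hchord := hvp u ⟨hu0, hu1⟩
    rw [hpt] at hchord
    have hA1 : L x = (1 - u) * L v + u * L p := by
      rw [← hpt]; exact hLaff v p u
    -- `t ≤ u` since `u * (p - v) = x - v = t * (z - v) ≥ t * (p - v)`.
    have he1 : u * (p - v) = t * (z - v) := by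
      rw [hu]; field_simp; simp only [hx]; ring
    have htu : t ≤ u := by
      have h4 : t * (p - v) ≤ t * (z - v) :=
        mul_le_mul_of_nonneg_left (by linarith [hz.1]) ht.1
      have h5 : t * (p - v) ≤ u * (p - v) := by linarith
      exact le_of_mul_le_mul_right h5 hpv
    have hprod : (0 : ℝ) ≤ (u - t) * (Ter.T v - L v) :=
      mul_nonneg (by linarith) (by linarith)
    rw [hLp] at hchord
    rw [hLz]
    nlinarith [hchord, hA1, hA2, hprod]
  · rcases le_or_gt x q with hxq | hxq
    · -- `p ≤ x ≤ q` : on the affine part.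
      have hTx : Ter.T x = L x := hTL x ⟨hxge, hxq⟩
      have hprod : (0 : ℝ) ≤ (1 - t) * (Ter.T v - L v) :=
        mul_nonneg (by linarith [ht.2]) (by linarith)
      rw [hTx, hA2, hLz]
      nlinarith [hprod]
    · -- `x > q`, so `v > q` and `x ≤ v`.
      have hvgtq : q < v := by
        by_contra h
        push_neg at h
        have := mul_nonneg (by linarith [ht.2] : (0:ℝ) ≤ 1 - t) (by linarith : (0:ℝ) ≤ q - v)
        have := mul_nonneg ht.1 (by linarith [hz.2] : (0:ℝ) ≤ q - z)
        simp only [hx] at hxq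
        nlinarith
      have hxv : x ≤ v := by
        have := mul_nonneg ht.1 (by linarith [hz.2] : (0:ℝ) ≤ v - z)
        simp only [hx]; nlinarith
      have hvq' : (0 : ℝ) < v - q := by linarith
      set u : ℝ := (v - x) / (v - q) with hu
      have hu0 : (0 : ℝ) ≤ u := div_nonneg (by linarith) hvq'.le
      have hu1 : u ≤ 1 := by rw [hu, div_le_one hvq']; linarith
      have hpt : (1 - u) * v + u * q = x := by
        rw [hu]; field_simp; ring
      have hchord := hvq u ⟨hu0, hu1⟩
      rw [hpt] at hchord
      have hA1 : L x = (1 - u) * L v + u * L q := by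
        rw [← hpt]; exact hLaff v q u
      have he1 : u * (v - q) = t * (v - z) := by
        rw [hu]; field_simp; simp only [hx]; ring
      have htu : t ≤ u := by
        have h4 : t * (v - q) ≤ t * (v - z) :=
          mul_le_mul_of_nonneg_left (by linarith [hz.2]) ht.1
        have h5 : t * (v - q) ≤ u * (v - q) := by linarith
        exact le_of_mul_le_mul_right h5 hvq'
      have hprod : (0 : ℝ) ≤ (u - t) * (Ter.T v - L v) :=
        mul_nonneg (by linarith) (by linarith)
      rw [hLq] at hchord
      rw [hLz]
      nlinarith [hchord, hA1, hA2, hprod]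
end
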